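/- For all integers m ≥ 2 and x ≥ 1 and every codeword c ∈ C(m,x) whose leftmost bit c_{m−1} equals 1, the index of c satisfies 2·g(c) = N(m,x) + Σ_{i=0}^{m−2} N(i−x+1, x)·[c_i = 1], where the sum ranges over the positions i with c_i = 1 and any term N(k,x) with k ≤ 1 is interpreted, by convention, as 2. -/

import Mathlib

/-- `noForbidden m x c` says the binary word `c = (c_{m-1}, …, c_0)` contains no contiguous
subword of the form `0 1^y 0` or `1 0^y 1` for any `1 ≤ y ≤ x`. -/
def noForbidden (m x : ℕ) (c : Fin m → Bool) : Prop :=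
  ∀ j y : ℕ, 1 ≤ y → y ≤ x → (h : j + y + 1 < m) →
    ¬ ((∀ k, 1 ≤ k → (hk : k ≤ y) → c ⟨j + k, by omega⟩ = ! c ⟨j, by omega⟩) ∧
        c ⟨j + y + 1, h⟩ = c ⟨j, by omega⟩)

/-- `N(m, x)`: the cardinality of the LOCO code `C(m, x)`. -/
noncomputable def locoN (m x : ℕ) : ℕ := Nat.card {c : Fin m → Bool // noForbidden m x c}

/-- `N(k, x)` extended to integer `k` by the convention `N(k, x) = 2` for `k ≤ 1`. -/
noncomputable def Nex (k : ℤ) (x : ℕ) : ℤ := if k ≤ 1 then 2 else (locoN k.toNat x : ℤ)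

/-- Strict lexicographic order on binary words, comparing bits from `c_{m-1}`
(most significant) down to `c_0`, with `0 < 1`. -/
def lexLt (m : ℕ) (d c : Fin m → Bool) : Prop :=
  ∃ i : Fin m, d i = false ∧ c i = true ∧ ∀ j : Fin m, (i : ℕ) < (j : ℕ) → d j = c j

/-- The index `g(m, x, c)` of a codeword: the number of codewords of `C(m, x)` that
precede `c` in lexicographic order. -/
noncomputable def locoIdx (m x : ℕ) (c : Fin m → Bool) : ℕ :=
  Nat.card {d : Fin m → Bool // noForbidden m x d ∧ lexLt m d c}

namespace Loco

/-- a forbidden pattern `t (!t)^y t` occurs at offset `o` (msb-first list). -/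
def PatAt (x : ℕ) (l : List Bool) (o y : ℕ) : Prop :=
  1 ≤ y ∧ y ≤ x ∧ ∃ t : Bool, l[o]? = some t ∧
    (∀ k, 1 ≤ k → k ≤ y → l[o+k]? = some (!t)) ∧ l[o+y+1]? = some t

def Bad (x : ℕ) (l : List Bool) : Prop := ∃ o y, PatAt x l o y

def Gd (x : ℕ) (l : List Bool) : Prop := ¬ Bad x l

theorem map_not_eq_some {a : Option Bool} {t : Bool} : a.map not = some t ↔ a = some (!t) := by
  cases a <;> simp

theorem patAt_drop {x : ℕ} {l : List Bool} {n o y : ℕ} :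
    PatAt x (l.drop n) o y ↔ PatAt x l (n + o) y := by
  unfold PatAt
  simp only [List.getElem?_drop]
  constructor
  · rintro ⟨h1, h2, t, h3, h4, h5⟩
    refine ⟨h1, h2, t, h3, fun k hk1 hk2 => ?_, ?_⟩
    · rw [show n + o + k = n + (o + k) by omega]; exact h4 k hk1 hk2
    · rw [show n + o + y + 1 = n + (o + y + 1) by omega]; exact h5
  · rintro ⟨h1, h2, t, h3, h4, h5⟩
    refine ⟨h1, h2, t, h3, fun k hk1 hk2 => ?_, ?_⟩
    · rw [show n + (o + k) = n + o + k by omega]; exact h4 k hk1 hk2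
    · rw [show n + (o + y + 1) = n + o + y + 1 by omega]; exact h5

theorem bad_of_drop {x : ℕ} {l : List Bool} {n : ℕ} (h : Bad x (l.drop n)) : Bad x l := by
  obtain ⟨o, y, hp⟩ := h
  exact ⟨n + o, y, patAt_drop.mp hp⟩

theorem gd_drop {x : ℕ} {l : List Bool} (h : Gd x l) (n : ℕ) : Gd x (l.drop n) :=
  fun hb => h (bad_of_drop hb)

theorem gd_tail {x : ℕ} {b : Bool} {l : List Bool} (h : Gd x (b :: l)) : Gd x l := by
  have := gd_drop h 1
  simpa using this

theorem bad_cons_of_bad {x : ℕ} {b : Bool} {l : List Bool} (h : Bad x l) : Bad x (b :: l) := by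
  obtain ⟨o, y, h1, h2, t, h3, h4, h5⟩ := h
  refine ⟨o + 1, y, h1, h2, t, ?_, fun k hk1 hk2 => ?_, ?_⟩
  · simpa using h3
  · rw [show o + 1 + k = (o + k) + 1 by omega, List.getElem?_cons_succ]; exact h4 k hk1 hk2
  · rw [show o + 1 + y + 1 = (o + y + 1) + 1 by omega, List.getElem?_cons_succ]; exact h5

theorem gd_of_gd_cons {x : ℕ} {b : Bool} {l : List Bool} (h : Gd x (b :: l)) : Gd x l :=
  gd_tail h

theorem patAt_map_not {x : ℕ} {l : List Bool} {o y : ℕ} :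
    PatAt x (l.map not) o y ↔ PatAt x l o y := by
  unfold PatAt
  simp only [List.getElem?_map, map_not_eq_some]
  constructor
  · rintro ⟨h1, h2, t, h3, h4, h5⟩
    refine ⟨h1, h2, !t, h3, fun k hk1 hk2 => ?_, h5⟩
    · simpa using h4 k hk1 hk2
  · rintro ⟨h1, h2, t, h3, h4, h5⟩
    refine ⟨h1, h2, !t, by simpa using h3, fun k hk1 hk2 => ?_, by simpa using h5⟩
    · simpa using h4 k hk1 hk2
  
theorem gd_map_not {x : ℕ} {l : List Bool} : Gd x (l.map not) ↔ Gd x l := by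
  unfold Gd Bad
  simp only [patAt_map_not]

end Loco

namespace Loco

theorem bad_cons_cases {x : ℕ} {b : Bool} {l : List Bool} (h : Bad x (b :: l)) :
    (∃ y, PatAt x (b :: l) 0 y) ∨ Bad x l := by
  obtain ⟨o, y, hp⟩ := h
  cases o with
  | zero => exact Or.inl ⟨y, hp⟩
  | succ o' =>
    right
    refine ⟨o', y, ?_⟩
    have : PatAt x ((b :: l).drop 1) o' y := patAt_drop.mpr (by rwa [show 1 + o' = o' + 1 by omega])
    simpa using this

theorem gd_cons_true_true {x : ℕ} {t : List Bool} :
    Gd x (true :: true :: t) ↔ Gd x (true :: t) := by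
  constructor
  · intro h hb
    exact h (bad_cons_of_bad hb)
  · intro h hb
    rcases bad_cons_cases hb with ⟨y, h1, h2, tt, h3, h4, h5⟩ | hb'
    · simp only [List.getElem?_cons_zero, Option.some.injEq] at h3
      have := h4 1 le_rfl h1
      rw [show 0 + 1 = 1 by omega] at this
      simp only [List.getElem?_cons_succ, List.getElem?_cons_zero, Option.some.injEq] at this
      rw [← h3] at this
      simp at this
    · exact h hb'

theorem getElem?_tf {i a : ℕ} {u : List Bool} (h1 : 1 ≤ i) (h2 : i ≤ a) :
    (true :: (List.replicate a false ++ u))[i]? = some false := by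
  rcases Nat.exists_eq_add_of_le h1 with ⟨j, rfl⟩
  rw [show 1 + j = j + 1 by omega, List.getElem?_cons_succ, List.getElem?_append]
  simp only [List.length_replicate]
  rw [if_pos (by omega), List.getElem?_replicate, if_pos (by omega)]

theorem drop_tf {a : ℕ} {u : List Bool} (ha : 1 ≤ a) :
    (true :: (List.replicate a false ++ u)).drop a = false :: u := by
  rcases Nat.exists_eq_add_of_le ha with ⟨j, rfl⟩
  rw [show 1 + j = j + 1 by omega, List.drop_succ_cons,
    List.drop_append_of_le_length (by simp), List.drop_replicate,
    show j + 1 - j = 1 by omega]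
  simp

theorem splice {x a : ℕ} (ha : x + 1 ≤ a) {u : List Bool} :
    Gd x (true :: (List.replicate a false ++ u)) ↔ Gd x (false :: u) := by
  have ha1 : 1 ≤ a := by omega
  constructor
  · intro h hb
    rw [← drop_tf ha1] at hb
    exact h (bad_of_drop hb)
  · intro h hb
    obtain ⟨o, y, h1, h2, t, h3, h4, h5⟩ := hb
    rcases Nat.lt_or_ge o 1 with ho | ho
    · -- o = 0 : t = true, but position y+1 ≤ a is false
      interval_cases o
      simp only [List.getElem?_cons_zero, Option.some.injEq] at h3
      rw [show 0 + y + 1 = y + 1 by omega] at h5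
      rw [getElem?_tf (by omega) (by omega)] at h5
      rw [← h3] at h5
      simp at h5
    · rcases Nat.lt_or_ge o a with ho2 | ho2
      · -- 1 ≤ o < a: t = false, but next position should be true
        rw [getElem?_tf ho (by omega)] at h3
        have h41 := h4 1 le_rfl h1
        rcases Nat.lt_or_ge (o + 1) (a + 1) with ho3 | ho3
        · rw [getElem?_tf (by omega) (by omega)] at h41
          simp only [Option.some.injEq] at h3 h41
          rw [← h3] at h41
          simp at h41
        · -- o + 1 = a + 1, i.e. o = a, contradiction with o < a
          omega
      · -- o ≥ a : pattern inside false :: u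
        apply h
        refine ⟨o - a, y, ?_⟩
        rw [← drop_tf ha1, patAt_drop, show a + (o - a) = o by omega]
        exact ⟨h1, h2, t, h3, h4, h5⟩

theorem gd_cons_replicate_all {x k : ℕ} : Gd x (true :: List.replicate k false) := by
  rintro ⟨o, y, h1, h2, t, h3, h4, h5⟩
  rcases Nat.lt_or_ge o 1 with ho | ho
  · interval_cases o
    simp only [List.getElem?_cons_zero, Option.some.injEq] at h3
    rw [show 0 + y + 1 = y + 1 by omega] at h5
    rcases Nat.lt_or_ge y k with hy | hy
    · have : (true :: List.replicate k false)[y+1]? = some false := by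
        rw [List.getElem?_cons_succ, List.getElem?_replicate, if_pos hy]
      rw [this] at h5
      rw [← h3] at h5
      simp at h5
    · have : (true :: List.replicate k false)[y+1]? = none := by
        rw [List.getElem?_cons_succ, List.getElem?_replicate, if_neg (by omega)]
      rw [this] at h5
      simp at h5
  · have h3' : t = false := by
      rcases Nat.exists_eq_add_of_le ho with ⟨j, rfl⟩
      rw [show 1 + j = j + 1 by omega, List.getElem?_cons_succ, List.getElem?_replicate] at h3
      by_cases hj : j < k
      · rw [if_pos hj] at h3; simpa [eq_comm] using h3
      · rw [if_neg hj] at h3; simp at h3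
    have h41 := h4 1 le_rfl h1
    rcases Nat.exists_eq_add_of_le ho with ⟨j, rfl⟩
    rw [show 1 + j + 1 = j + 1 + 1 by omega, List.getElem?_cons_succ, List.getElem?_replicate] at h41
    subst h3'
    by_cases hj : j + 1 < k
    · rw [if_pos hj] at h41; simp at h41
    · rw [if_neg hj] at h41; simp at h41

/-- forced falses after "true, false" prefix -/
theorem gd_tf_forced {x : ℕ} {e : List Bool} (h : Gd x (true :: false :: e)) :
    ∀ p, p < x → e[p]? ≠ some true := by
  intro p
  induction p using Nat.strong_induction_on with
  | _ p IH =>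
    intro hpx hpt
    apply h
    refine ⟨0, p + 1, by omega, by omega, true, by simp, fun k hk1 hk2 => ?_, ?_⟩
    · rw [show 0 + k = k by omega]
      rcases Nat.exists_eq_add_of_le hk1 with ⟨j, rfl⟩
      rw [show 1 + j = j + 1 by omega, List.getElem?_cons_succ]
      cases j with
      | zero => simp
      | succ j' =>
        rw [List.getElem?_cons_succ]
        have hj' : j' < p := by omega
        have := IH j' hj' (by omega)
        -- e[j']? ≠ some true; also j' < p ≤ e.length  (since e[p]? = some true means p < e.length)
        have hpe : p < e.length := by
          by_contra hc
          rw [List.getElem?_eq_none (by omega)] at hpt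
          cases hpt
        have hj'e : j' < e.length := by omega
        rw [List.getElem?_eq_getElem hj'e] at this ⊢
        simp only [Bool.not_true]
        cases hv : e[j'] with
        | false => rfl
        | true => exact absurd (by rw [hv]) this
    · rw [show 0 + (p+1) + 1 = (p + 1) + 1 by omega, List.getElem?_cons_succ,
        List.getElem?_cons_succ]
      exact hpt

end Loco
namespace Loco

instance listFinite (n : ℕ) (P : List Bool → Prop) :
    Finite {l : List Bool // l.length = n ∧ P l} := by
  apply Finite.of_injective (fun e : {l : List Bool // l.length = n ∧ P l} =>
    (fun i : Fin n => e.1[i.1]'(by rw [e.2.1]; exact i.2)))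
  rintro ⟨l1, h1, hp1⟩ ⟨l2, h2, hp2⟩ h
  ext1
  apply List.ext_getElem (by rw [h1, h2])
  intro i hi1 hi2
  exact congrFun h ⟨i, by rwa [← h1]⟩

theorem card_split_head (n : ℕ) (P : List Bool → Prop) :
    Nat.card {l : List Bool // l.length = n + 1 ∧ P l}
      = Nat.card {t : List Bool // t.length = n ∧ P (true :: t)}
        + Nat.card {t : List Bool // t.length = n ∧ P (false :: t)} := by
  rw [← Nat.card_sum]
  apply (Nat.card_eq_of_bijective
    (Sum.elim
      (fun t : {t : List Bool // t.length = n ∧ P (true :: t)} =>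
        (⟨true :: t.1, by simp [t.2.1], t.2.2⟩ : {l : List Bool // l.length = n + 1 ∧ P l}))
      (fun t : {t : List Bool // t.length = n ∧ P (false :: t)} =>
        (⟨false :: t.1, by simp [t.2.1], t.2.2⟩ : {l : List Bool // l.length = n + 1 ∧ P l})))
    ⟨?_, ?_⟩).symm
  · rintro (⟨t1, ht1⟩ | ⟨t1, ht1⟩) (⟨t2, ht2⟩ | ⟨t2, ht2⟩) h <;>
      simp only [Sum.elim_inl, Sum.elim_inr, Subtype.mk.injEq, List.cons.injEq] at h
    · simp [h.2]
    · exact absurd h.1 (by simp)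
    · exact absurd h.1 (by simp)
    · simp [h.2]
  · rintro ⟨l, hl, hp⟩
    cases l with
    | nil => simp at hl
    | cons b t =>
      cases b with
      | true => exact ⟨Sum.inl ⟨t, by simpa using hl, hp⟩, rfl⟩
      | false => exact ⟨Sum.inr ⟨t, by simpa using hl, hp⟩, rfl⟩

theorem map_not_map_not (l : List Bool) : (l.map not).map not = l := by
  rw [List.map_map]
  have : not ∘ not = id := by funext b; cases b <;> rfl
  rw [this, List.map_id]

theorem card_map_not (n : ℕ) (P Q : List Bool → Prop)
    (h : ∀ l : List Bool, l.length = n → (P l ↔ Q (l.map not))) :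
    Nat.card {l : List Bool // l.length = n ∧ P l}
      = Nat.card {l : List Bool // l.length = n ∧ Q l} := by
  apply Nat.card_eq_of_bijective
    (fun e : {l : List Bool // l.length = n ∧ P l} =>
      (⟨e.1.map not, by simp [e.2.1], (h e.1 e.2.1).mp e.2.2⟩ :
        {l : List Bool // l.length = n ∧ Q l}))
  constructor
  · rintro ⟨l1, hl1⟩ ⟨l2, hl2⟩ hh
    simp only [Subtype.mk.injEq] at hh
    have := congrArg (List.map not) hh
    rw [map_not_map_not, map_not_map_not] at this
    simp [this]
  · rintro ⟨u, hu, hq⟩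
    refine ⟨⟨u.map not, by simp [hu], ?_⟩, ?_⟩
    · rw [h _ (by simp [hu]), map_not_map_not]; exact hq
    · exact Subtype.ext (map_not_map_not u)

/- Lex facts -/
theorem lex_trichotomy : ∀ {e f : List Bool}, e.length = f.length → e ≠ f →
    List.Lex (· < ·) e f ∨ List.Lex (· < ·) f e := by
  intro e
  induction e with
  | nil =>
    intro f hl hne
    cases f with
    | nil => exact absurd rfl hne
    | cons b t => simp at hl
  | cons a e' IH =>
    intro f hl hne
    cases f with
    | nil => simp at hl
    | cons b f' =>
      by_cases hab : a = b
      · subst hab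
        have hne' : e' ≠ f' := fun hh => hne (by rw [hh])
        rcases IH (by simpa using hl) hne' with h | h
        · exact Or.inl (List.Lex.cons h)
        · exact Or.inr (List.Lex.cons h)
      · cases a <;> cases b
        · exact absurd rfl hab
        · exact Or.inl (List.Lex.rel (by simp [Bool.lt_iff]))
        · exact Or.inr (List.Lex.rel (by simp [Bool.lt_iff]))
        · exact absurd rfl hab

theorem lex_asymm : ∀ {e f : List Bool},
    List.Lex (· < ·) e f → List.Lex (· < ·) f e → False := by
  intro e
  induction e with
  | nil => intro f h1 h2; cases h2
  | cons a e' IH =>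
    intro f h1 h2
    cases f with
    | nil => cases h1
    | cons b f' =>
      cases h1 with
      | rel h =>
        cases h2 with
        | rel h' =>
          rw [Bool.lt_iff] at h h'
          rw [h.2] at h'
          simp at h'
        | cons h' =>
          rw [Bool.lt_iff] at h
          obtain ⟨hf, ht⟩ := h
          rw [hf] at ht
          simp at ht
      | cons h =>
        cases h2 with
        | rel h' =>
          rw [Bool.lt_iff] at h'
          obtain ⟨hf, ht⟩ := h'
          rw [hf] at ht
          simp at ht
        | cons h' => exact IH h h'

theorem lex_irrefl : ∀ {e : List Bool}, ¬ List.Lex (· < ·) e e := fun h => lex_asymm h h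

theorem card_partition (n : ℕ) (P : List Bool → Prop) (g : List Bool)
    (hgl : g.length = n) (hgp : P g) :
    Nat.card {l : List Bool // l.length = n ∧ P l}
      = Nat.card {l : List Bool // l.length = n ∧ (P l ∧ List.Lex (· < ·) l g)}
        + Nat.card {l : List Bool // l.length = n ∧ (P l ∧ List.Lex (· < ·) g l)} + 1 := by
  rw [← Nat.card_sum, show (1 : ℕ) = Nat.card Unit from (Nat.card_unique).symm, ← Nat.card_sum]
  apply (Nat.card_eq_of_bijective
    (Sum.elim
      (Sum.elim
        (fun t : {l : List Bool // l.length = n ∧ (P l ∧ List.Lex (· < ·) l g)} =>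
          (⟨t.1, t.2.1, t.2.2.1⟩ : {l : List Bool // l.length = n ∧ P l}))
        (fun t : {l : List Bool // l.length = n ∧ (P l ∧ List.Lex (· < ·) g l)} =>
          (⟨t.1, t.2.1, t.2.2.1⟩ : {l : List Bool // l.length = n ∧ P l})))
      (fun _ : Unit => (⟨g, hgl, hgp⟩ : {l : List Bool // l.length = n ∧ P l})))
    ⟨?_, ?_⟩).symm
  · rintro ((⟨t1, ht1⟩ | ⟨t1, ht1⟩) | ⟨⟩) ((⟨t2, ht2⟩ | ⟨t2, ht2⟩) | ⟨⟩) h <;>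
      simp only [Sum.elim_inl, Sum.elim_inr, Subtype.mk.injEq] at h
    · simp [h]
    · exact absurd (h ▸ ht2.2.2) (fun hh => lex_asymm ht1.2.2 hh)
    · exact absurd (h ▸ ht1.2.2) (fun hh => lex_irrefl hh)
    · exact absurd (h ▸ ht2.2.2) (fun hh => lex_asymm ht1.2.2 hh)
    · simp [h]
    · exact absurd (h ▸ ht1.2.2) (fun hh => lex_irrefl hh)
    · exact absurd (h.symm ▸ ht2.2.2) (fun hh => lex_irrefl hh)
    · exact absurd (h.symm ▸ ht2.2.2) (fun hh => lex_irrefl hh)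
    · rfl
  · rintro ⟨l, hl, hp⟩
    by_cases hlg : l = g
    · exact ⟨Sum.inr Unit.unit, by simp [hlg]⟩
    · rcases lex_trichotomy (by rw [hl, hgl]) hlg with h | h
      · exact ⟨Sum.inl (Sum.inl ⟨l, hl, hp, h⟩), rfl⟩
      · exact ⟨Sum.inl (Sum.inr ⟨l, hl, hp, h⟩), rfl⟩

/- Lex complementation and structure lemmas -/
theorem lex_map_not : ∀ {e f : List Bool}, e.length = f.length →
    (List.Lex (· < ·) e f ↔ List.Lex (· < ·) (f.map not) (e.map not)) := by
  intro e
  induction e with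
  | nil =>
    intro f hl
    cases f with
    | nil => constructor <;> (intro h; cases h)
    | cons b t => simp at hl
  | cons a e' IH =>
    intro f hl
    cases f with
    | nil => simp at hl
    | cons b f' =>
      simp only [List.map_cons]
      constructor
      · intro h
        cases h with
        | rel h => rw [Bool.lt_iff] at h; rw [h.1, h.2]; exact List.Lex.rel (by simp [Bool.lt_iff])
        | cons h => exact List.Lex.cons ((IH (by simpa using hl)).mp h)
      · intro h
        cases a <;> cases b <;> simp only [Bool.not_true, Bool.not_false] at h
        · cases h with
          | rel hr => exact absurd hr (by simp [Bool.lt_iff])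
          | cons hc => exact List.Lex.cons ((IH (by simpa using hl)).mpr hc)
        · exact List.Lex.rel (by simp [Bool.lt_iff])
        · cases h with
          | rel hr => exact absurd hr (by simp [Bool.lt_iff])
        · cases h with
          | rel hr => exact absurd hr (by simp [Bool.lt_iff])
          | cons hc => exact List.Lex.cons ((IH (by simpa using hl)).mpr hc)

end Loco
namespace Loco

def listOf {m : ℕ} (c : Fin m → Bool) : List Bool :=
  List.ofFn (fun p : Fin m => c ⟨m - 1 - p.1, by omega⟩)

theorem length_listOf {m : ℕ} (c : Fin m → Bool) : (listOf c).length = m := by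
  simp [listOf]

theorem fin_congr {m : ℕ} (c : Fin m → Bool) {i j : ℕ} (hi : i < m) (hj : j < m)
    (h : i = j) : c ⟨i, hi⟩ = c ⟨j, hj⟩ := by subst h; rfl

theorem listOf_getElem? {m : ℕ} (c : Fin m → Bool) {p : ℕ} (hp : p < m) :
    (listOf c)[p]? = some (c ⟨m - 1 - p, by omega⟩) := by
  unfold listOf
  rw [List.getElem?_ofFn]
  simp [List.ofFnNthVal, hp]

theorem listOf_getElem?_none {m : ℕ} (c : Fin m → Bool) {p : ℕ} (hp : ¬ p < m) :
    (listOf c)[p]? = none := by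
  rw [List.getElem?_eq_none]
  rw [length_listOf]
  omega

theorem noForbidden_iff_gd {m x : ℕ} (c : Fin m → Bool) :
    noForbidden m x c ↔ Gd x (listOf c) := by
  constructor
  · rintro h ⟨o, y, h1, h2, t, h3, h4, h5⟩
    have hb : o + y + 1 < m := by
      by_contra hb
      rw [listOf_getElem?_none c hb] at h5
      cases h5
    apply h (m - 2 - o - y) y h1 h2 (by omega)
    have hend : c ⟨m - 2 - o - y, by omega⟩ = t := by
      have := h5
      rw [listOf_getElem? c (show o + y + 1 < m by omega)] at this
      simp only [Option.some.injEq] at this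
      rw [← this]
      exact fin_congr c (by omega) (by omega) (by omega)
    constructor
    · intro k hk1 hk2
      have e1 := h4 (y + 1 - k) (by omega) (by omega)
      rw [show o + (y + 1 - k) = o + y + 1 - k by omega] at e1
      rw [listOf_getElem? c (show o + y + 1 - k < m by omega)] at e1
      simp only [Option.some.injEq] at e1
      have e2 : c ⟨m - 2 - o - y + k, by omega⟩ = !t := by
        rw [← e1]
        exact fin_congr c (by omega) (by omega) (by omega)
      rw [e2, hend]
    · have e1 := h3
      rw [listOf_getElem? c (show o < m by omega)] at e1
      simp only [Option.some.injEq] at e1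
      have e2 : c ⟨m - 2 - o - y + y + 1, by omega⟩ = t := by
        rw [← e1]
        exact fin_congr c (by omega) (by omega) (by omega)
      rw [e2, hend]
  · intro hg j y hy1 hy2 hjm hpat
    obtain ⟨hmid, hend⟩ := hpat
    apply hg
    refine ⟨m - 1 - (j + y + 1), y, hy1, hy2, c ⟨j + y + 1, hjm⟩, ?_, ?_, ?_⟩
    · rw [listOf_getElem? c (show m - 1 - (j + y + 1) < m by omega)]
      simp only [Option.some.injEq]
      exact fin_congr c (by omega) (by omega) (by omega)
    · intro k hk1 hk2
      rw [show m - 1 - (j + y + 1) + k = m - 1 - (j + y + 1 - k) by omega]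
      rw [listOf_getElem? c (show m - 1 - (j + y + 1 - k) < m by omega)]
      simp only [Option.some.injEq]
      have e1 := hmid (y + 1 - k) (by omega) (by omega)
      have e2 : c ⟨m - 1 - (m - 1 - (j + y + 1 - k)), by omega⟩
          = c ⟨j + (y + 1 - k), by omega⟩ :=
        fin_congr c (by omega) (by omega) (by omega)
      rw [e2, e1]
      congr 1
      exact hend.symm
    · rw [show m - 1 - (j + y + 1) + y + 1 = m - 1 - j by omega]
      rw [listOf_getElem? c (show m - 1 - j < m by omega)]
      simp only [Option.some.injEq]
      exact (fin_congr c (by omega) (show j < m by omega) (by omega)).trans hend.symm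

theorem lex_iff : ∀ {l1 l2 : List Bool}, l1.length = l2.length →
    (List.Lex (· < ·) l1 l2 ↔
      ∃ p, p < l2.length ∧ l1[p]? = some false ∧ l2[p]? = some true ∧
        ∀ q, q < p → l1[q]? = l2[q]?) := by
  intro l1
  induction l1 with
  | nil =>
    intro l2 h
    cases l2 with
    | nil =>
      constructor
      · intro hh; cases hh
      · rintro ⟨p, hp, _⟩; simp at hp
    | cons b t => simp at h
  | cons a t1 IH =>
    intro l2 h
    cases l2 with
    | nil => simp at h
    | cons b t2 =>
      constructor
      · intro hh
        cases hh with
        | rel hr =>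
          rw [Bool.lt_iff] at hr
          exact ⟨0, by simp, by simp [hr.1], by simp [hr.2], fun q hq => by omega⟩
        | cons hc =>
          obtain ⟨p, hp, e1, e2, e3⟩ := (IH (by simpa using h)).mp hc
          refine ⟨p + 1, by simpa using hp, by simpa using e1, by simpa using e2, ?_⟩
          intro q hq
          cases q with
          | zero => simp
          | succ q' =>
            rw [List.getElem?_cons_succ, List.getElem?_cons_succ]
            exact e3 q' (by omega)
      · rintro ⟨p, hp, e1, e2, e3⟩
        cases p with
        | zero =>
          simp only [List.getElem?_cons_zero, Option.some.injEq] at e1 e2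
          rw [e1, e2]
          exact List.Lex.rel (by simp [Bool.lt_iff])
        | succ p' =>
          have hab : a = b := by
            have := e3 0 (by omega)
            simpa using this
          subst hab
          apply List.Lex.cons
          apply (IH (by simpa using h)).mpr
          refine ⟨p', by simpa using hp, by simpa using e1, by simpa using e2, ?_⟩
          intro q hq
          have := e3 (q + 1) (by omega)
          simpa using this

theorem lexLt_iff_lex {m : ℕ} (d c : Fin m → Bool) :
    lexLt m d c ↔ List.Lex (· < ·) (listOf d) (listOf c) := by
  rw [lex_iff (by rw [length_listOf, length_listOf])]
  rw [length_listOf]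
  constructor
  · rintro ⟨i, hdi, hci, hab⟩
    have him : i.1 < m := i.2
    refine ⟨m - 1 - i.1, by omega, ?_, ?_, ?_⟩
    · rw [listOf_getElem? d (show m - 1 - i.1 < m by omega)]
      simp only [Option.some.injEq]
      rw [show (⟨m - 1 - (m - 1 - i.1), by omega⟩ : Fin m) = i from Fin.ext (by simp; omega)]
      exact hdi
    · rw [listOf_getElem? c (show m - 1 - i.1 < m by omega)]
      simp only [Option.some.injEq]
      rw [show (⟨m - 1 - (m - 1 - i.1), by omega⟩ : Fin m) = i from Fin.ext (by simp; omega)]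
      exact hci
    · intro q hq
      rw [listOf_getElem? d (show q < m by omega),
        listOf_getElem? c (show q < m by omega)]
      have := hab ⟨m - 1 - q, by omega⟩ (by simp; omega)
      rw [this]
  · rintro ⟨p, hp, e1, e2, e3⟩
    rw [listOf_getElem? d hp] at e1
    rw [listOf_getElem? c hp] at e2
    simp only [Option.some.injEq] at e1 e2
    refine ⟨⟨m - 1 - p, by omega⟩, e1, e2, ?_⟩
    intro j hj
    simp only at hj
    have hq : m - 1 - j.1 < p := by have := j.2; omega
    have := e3 (m - 1 - j.1) hq
    rw [listOf_getElem? d (show m - 1 - j.1 < m by omega),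
      listOf_getElem? c (show m - 1 - j.1 < m by omega)] at this
    simp only [Option.some.injEq] at this
    have hje : (⟨m - 1 - (m - 1 - j.1), by omega⟩ : Fin m) = j :=
      Fin.ext (by simp; have := j.2; omega)
    rw [hje] at this
    exact this

theorem card_transfer (m : ℕ) (P : (Fin m → Bool) → Prop) (Q : List Bool → Prop)
    (h : ∀ c : Fin m → Bool, P c ↔ Q (listOf c)) :
    Nat.card {c : Fin m → Bool // P c} = Nat.card {l : List Bool // l.length = m ∧ Q l} := by
  apply Nat.card_eq_of_bijective
    (fun e : {c : Fin m → Bool // P c} =>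
      (⟨listOf e.1, length_listOf e.1, (h e.1).mp e.2⟩ : {l : List Bool // l.length = m ∧ Q l}))
  constructor
  · rintro ⟨c1, hc1⟩ ⟨c2, hc2⟩ hh
    simp only [Subtype.mk.injEq] at hh
    ext1
    funext i
    have him : i.1 < m := i.2
    have e1 := listOf_getElem? c1 (show m - 1 - i.1 < m by omega)
    have e2 := listOf_getElem? c2 (show m - 1 - i.1 < m by omega)
    rw [hh, e2] at e1
    simp only [Option.some.injEq] at e1
    have hie : (⟨m - 1 - (m - 1 - i.1), by omega⟩ : Fin m) = i := Fin.ext (by simp; omega)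
    rw [hie] at e1
    exact e1.symm
  · rintro ⟨l, hl, hq⟩
    set c : Fin m → Bool := fun i => l[m - 1 - i.1]'(by rw [hl]; omega) with hc
    have hlc : listOf c = l := by
      apply List.ext_getElem?
      intro p
      by_cases hp : p < m
      · rw [listOf_getElem? c hp]
        rw [List.getElem?_eq_getElem (show p < l.length by omega)]
        simp only [Option.some.injEq, hc]
        congr 1
        omega
      · rw [listOf_getElem?_none c hp, List.getElem?_eq_none (by omega)]
    exact ⟨⟨c, (h c).mpr (by rw [hlc]; exact hq)⟩, by simp [hlc]⟩

end Loco
namespace Loco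

/-! ### cardinalities of the basic classes -/

noncomputable def c1 (x q : ℕ) : ℕ := Nat.card {e : List Bool // e.length = q ∧ Gd x (true :: e)}

theorem gd_true_nil {x : ℕ} : Gd x [true] := by
  have := gd_cons_replicate_all (x := x) (k := 0)
  simpa using this

theorem c1_zero {x : ℕ} : c1 x 0 = 1 := by
  unfold c1
  haveI : Unique {e : List Bool // e.length = 0 ∧ Gd x (true :: e)} :=
    { default := ⟨[], rfl, gd_true_nil⟩
      uniq := by
        rintro ⟨e, he, _⟩
        apply Subtype.ext
        exact List.length_eq_zero_iff.mp he }
  exact Nat.card_unique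

theorem locoN_eq_card (m x : ℕ) :
    locoN m x = Nat.card {l : List Bool // l.length = m ∧ Gd x l} := by
  unfold locoN
  exact card_transfer m _ _ (fun c => noForbidden_iff_gd c)

theorem c0_eq_c1 (x q : ℕ) :
    Nat.card {e : List Bool // e.length = q ∧ Gd x (false :: e)} = c1 x q := by
  unfold c1
  apply card_map_not
  intro l _
  have h1 : (false :: l).map not = true :: l.map not := by simp
  rw [← h1, gd_map_not]

theorem two_c1 (x q : ℕ) : 2 * (c1 x q : ℤ) = Nex ((q : ℤ) + 1) x := by
  cases q with
  | zero =>
    rw [c1_zero]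
    unfold Nex
    norm_num
  | succ q =>
    have h1 : ¬ (((q + 1 : ℕ) : ℤ) + 1 ≤ 1) := by push_cast; omega
    rw [Nex, if_neg h1]
    have h2 : (((q + 1 : ℕ) : ℤ) + 1).toNat = q + 1 + 1 := by push_cast; omega
    rw [h2, locoN_eq_card]
    rw [card_split_head (q + 1) (Gd x)]
    rw [c0_eq_c1]
    unfold c1
    push_cast
    ring

noncomputable def cardA (x k : ℕ) : ℕ :=
  Nat.card {e : List Bool // e.length = k ∧ Gd x (true :: false :: e)}

theorem tf_decomp {x : ℕ} {e : List Bool} (h : Gd x (true :: false :: e)) (hk : x ≤ e.length) :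
    e = List.replicate x false ++ e.drop x := by
  conv_lhs => rw [← List.take_append_drop x e]
  congr 1
  apply List.ext_getElem (by simp; omega)
  intro i hi1 hi2
  simp only [List.getElem_replicate]
  have hix : i < x := by simpa using hi2
  have hforced := gd_tf_forced h i hix
  have hie : i < e.length := by omega
  rw [List.getElem_take]
  rw [List.getElem?_eq_getElem hie] at hforced
  cases hv : e[i] with
  | false => rfl
  | true => exact absurd (by rw [hv]) hforced

theorem drop_rep_append (a : ℕ) (u : List Bool) :
    (List.replicate a false ++ u).drop a = u := by
  rw [List.drop_append_of_le_length (by simp), List.drop_replicate]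
  simp

theorem tfcons_eq {x : ℕ} (u : List Bool) :
    true :: false :: (List.replicate x false ++ u)
      = true :: (List.replicate (x + 1) false ++ u) := by
  simp [List.replicate_succ]

theorem two_cardA (x k : ℕ) (hx : 1 ≤ x) : 2 * (cardA x k : ℤ) = Nex ((k : ℤ) - x + 1) x := by
  rcases Nat.lt_or_ge k x with hkx | hkx
  · have hA : cardA x k = 1 := by
      unfold cardA
      haveI : Unique {e : List Bool // e.length = k ∧ Gd x (true :: false :: e)} :=
        { default := ⟨List.replicate k false, by simp, by
            rw [show true :: false :: List.replicate k false
                = true :: List.replicate (k + 1) false by simp [List.replicate_succ]]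
            exact gd_cons_replicate_all⟩
          uniq := by
            rintro ⟨e, he, hg⟩
            apply Subtype.ext
            simp only
            apply List.ext_getElem (by simp [he])
            intro i hi1 hi2
            simp only [List.getElem_replicate]
            have hforced := gd_tf_forced hg i (by omega)
            rw [List.getElem?_eq_getElem hi1] at hforced
            cases hv : e[i] with
            | false => rfl
            | true => exact absurd (by rw [hv]) hforced }
      exact Nat.card_unique
    rw [hA]
    rw [Nex, if_pos (by omega)]
    norm_num
  · have hA : cardA x k = c1 x (k - x) := by
      rw [← c0_eq_c1]
      unfold cardA
      apply Nat.card_eq_of_bijective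
        (fun e : {e : List Bool // e.length = k ∧ Gd x (true :: false :: e)} =>
          (⟨e.1.drop x, by simp [e.2.1], by
            have hd := tf_decomp e.2.2 (by omega)
            have := e.2.2
            rw [hd, tfcons_eq, splice (le_refl (x+1))] at this
            exact this⟩ :
            {u : List Bool // u.length = k - x ∧ Gd x (false :: u)}))
      constructor
      · rintro ⟨e1, he1⟩ ⟨e2, he2⟩ hh
        simp only [Subtype.mk.injEq] at hh
        apply Subtype.ext
        simp only
        rw [tf_decomp he1.2 (by omega), tf_decomp he2.2 (by omega), hh]
      · rintro ⟨u, hu, hgu⟩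
        refine ⟨⟨List.replicate x false ++ u, by simp; omega, ?_⟩, ?_⟩
        · rw [tfcons_eq, splice (le_refl (x+1))]
          exact hgu
        · apply Subtype.ext
          simp only
          exact drop_rep_append x u
    rw [hA]
    have := two_c1 x (k - x)
    rw [this]
    congr 1
    omega

/-! ### the star identity -/

theorem gdtt_card (x q : ℕ) :
    Nat.card {t : List Bool // t.length = q ∧ Gd x (true :: true :: t)} = c1 x q := by
  unfold c1
  exact Nat.card_congr (Equiv.subtypeEquivRight
    (fun t => and_congr_right (fun _ => gd_cons_true_true)))

theorem c1_succ (x q : ℕ) : c1 x (q + 1) = c1 x q + cardA x q := by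
  unfold c1
  rw [card_split_head q (fun l => Gd x (true :: l))]
  rw [gdtt_card]
  rfl

theorem star (x : ℕ) (hx : 1 ≤ x) (q : ℕ) :
    Nex ((q : ℤ) + 1) x = 2 + ∑ i ∈ Finset.range q, Nex ((i : ℤ) - x + 1) x := by
  induction q with
  | zero =>
    rw [Nex, if_pos (by norm_num)]
    simp
  | succ q IH =>
    rw [Finset.sum_range_succ]
    have e1 : 2 * (c1 x (q + 1) : ℤ) = 2 * (c1 x q : ℤ) + 2 * (cardA x q : ℤ) := by
      rw [c1_succ]; push_cast; ring
    rw [two_c1, two_c1, two_cardA x q hx] at e1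
    have harg : (((q + 1 : ℕ)) : ℤ) + 1 = ((q : ℤ) + 1) + 1 := by push_cast; ring
    rw [harg]
    have : Nex ((q : ℤ) + 1 + 1) x = Nex ((q : ℤ) + 1) x + Nex ((q : ℤ) - x + 1) x := by
      rw [show ((q : ℤ) + 1 + 1) = ((q + 1 : ℕ) : ℤ) + 1 by push_cast; ring]
      rw [e1]
    rw [this, IH]
    ring

/-! ### the weight function -/

noncomputable def Wt (x : ℕ) : List Bool → ℤ
  | [] => 0
  | b :: t => (if b = true then Nex ((t.length : ℤ) - (x : ℤ) + 1) x else 0) + Wt x t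

theorem wt_rep_append (x a : ℕ) (s : List Bool) :
    Wt x (List.replicate a false ++ s) = Wt x s := by
  induction a with
  | zero => simp
  | succ a IH =>
    rw [List.replicate_succ, List.cons_append]
    show (if false = true then _ else 0) + Wt x (List.replicate a false ++ s) = Wt x s
    rw [IH]
    simp

theorem wt_add_not (x : ℕ) (f : List Bool) :
    Wt x f + Wt x (f.map not) = ∑ i ∈ Finset.range f.length, Nex ((i : ℤ) - x + 1) x := by
  induction f with
  | nil => simp [Wt]
  | cons b t IH =>
    rw [List.map_cons]
    show ((if b = true then Nex ((t.length : ℤ) - x + 1) x else 0) + Wt x t)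
      + ((if (!b) = true then Nex (((t.map not).length : ℤ) - x + 1) x else 0) + Wt x (t.map not))
      = _
    rw [List.length_map]
    have hlen : (b :: t).length = t.length + 1 := rfl
    rw [hlen, Finset.sum_range_succ, ← IH]
    cases b <;> simp <;> ring

/-! ### the index function on lists -/

noncomputable def hh (x n : ℕ) (f : List Bool) : ℕ :=
  Nat.card {e : List Bool // e.length = n ∧ (Gd x (true :: e) ∧ List.Lex (· < ·) e f)}

theorem lex_cons_same {a : Bool} {t s : List Bool} :
    List.Lex (· < ·) (a :: t) (a :: s) ↔ List.Lex (· < ·) t s := by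
  constructor
  · intro h
    cases h with
    | rel hr =>
      rw [Bool.lt_iff] at hr
      obtain ⟨h1, h2⟩ := hr
      rw [h1] at h2
      simp at h2
    | cons hc => exact hc
  · exact List.Lex.cons

theorem not_lex_rep : ∀ (n : ℕ) (e : List Bool), e.length = n →
    ¬ List.Lex (· < ·) e (List.replicate n false) := by
  intro n
  induction n with
  | zero =>
    intro e he
    intro h; cases h
  | succ n IH =>
    intro e he h
    cases e with
    | nil => simp at he
    | cons b t =>
      rw [List.replicate_succ] at h
      cases h with
      | rel hr => rw [Bool.lt_iff] at hr; exact absurd hr.2 (by simp)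
      | cons hc => exact IH t (by simpa using he) hc

theorem decomp (f : List Bool) :
    (∃ a f'', f = List.replicate a false ++ true :: f'') ∨ f = List.replicate f.length false := by
  induction f with
  | nil => right; rfl
  | cons b t IH =>
    cases b with
    | true => exact Or.inl ⟨0, t, rfl⟩
    | false =>
      rcases IH with ⟨a, f'', h⟩ | h
      · exact Or.inl ⟨a + 1, f'', by rw [List.replicate_succ, List.cons_append, h]⟩
      · right
        rw [List.length_cons, List.replicate_succ]
        exact congrArg (List.cons false) h

theorem lex_lead : ∀ (a : ℕ) (s e : List Bool), e.length = a + s.length →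
    List.Lex (· < ·) e (List.replicate a false ++ s) →
    e.take a = List.replicate a false ∧ List.Lex (· < ·) (e.drop a) s := by
  intro a
  induction a with
  | zero => intro s e _ h2; exact ⟨by simp, by simpa using h2⟩
  | succ a IH =>
    intro s e h1 h2
    cases e with
    | nil => simp at h1; omega
    | cons b t =>
      rw [List.replicate_succ, List.cons_append] at h2
      cases h2 with
      | rel hr => rw [Bool.lt_iff] at hr; exact absurd hr.2 (by simp)
      | cons hc =>
        obtain ⟨ht, hl⟩ := IH s t (by simpa [Nat.succ_add] using h1) hc
        constructor
        · rw [List.replicate_succ, List.take_succ_cons, ht]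
        · simpa using hl

theorem lex_append_left : ∀ (w : List Bool) {r s : List Bool},
    List.Lex (· < ·) r s → List.Lex (· < ·) (w ++ r) (w ++ s) := by
  intro w
  induction w with
  | nil => intro r s h; simpa using h
  | cons b t IH => intro r s h; exact List.Lex.cons (IH h)

end Loco
namespace Loco

theorem ML (x : ℕ) (hx : 1 ≤ x) : ∀ n : ℕ, ∀ f : List Bool, f.length = n → Gd x (true :: f) →
    2 * (hh x n f : ℤ) = Wt x f := by
  intro n
  induction n using Nat.strong_induction_on with
  | _ n IH =>
    intro f hfl hgd
    cases f with
    | nil =>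
      have hn : n = 0 := by simpa using hfl.symm
      subst hn
      haveI : IsEmpty {e : List Bool // e.length = 0 ∧
          (Gd x (true :: e) ∧ List.Lex (· < ·) e [])} :=
        ⟨by rintro ⟨e, _, _, hl⟩; cases hl⟩
      unfold hh
      rw [Nat.card_of_isEmpty]
      simp [Wt]
    | cons b f' =>
      cases b with
      | true =>
        have hn : n = f'.length + 1 := by simpa using hfl.symm
        subst hn
        unfold hh
        rw [card_split_head f'.length
          (fun l => Gd x (true :: l) ∧ List.Lex (· < ·) l (true :: f'))]
        have e1 : Nat.card {t : List Bool // t.length = f'.length ∧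
            (Gd x (true :: true :: t) ∧ List.Lex (· < ·) (true :: t) (true :: f'))}
            = hh x f'.length f' := by
          unfold hh
          exact Nat.card_congr (Equiv.subtypeEquivRight (fun t => and_congr_right (fun _ =>
            and_congr gd_cons_true_true lex_cons_same)))
        have e2 : Nat.card {t : List Bool // t.length = f'.length ∧
            (Gd x (true :: false :: t) ∧ List.Lex (· < ·) (false :: t) (true :: f'))}
            = cardA x f'.length := by
          unfold cardA
          exact Nat.card_congr (Equiv.subtypeEquivRight (fun t => and_congr_right (fun _ =>
            and_iff_left (List.Lex.rel (by simp [Bool.lt_iff])))))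
        rw [e1, e2]
        have hgd' : Gd x (true :: f') := gd_cons_true_true.mp hgd
        have ih := IH f'.length (by omega) f' rfl hgd'
        have hA := two_cardA x f'.length hx
        show 2 * ((hh x f'.length f' + cardA x f'.length : ℕ) : ℤ)
          = (if true = true then Nex ((f'.length : ℤ) - x + 1) x else 0) + Wt x f'
        rw [if_pos rfl]
        push_cast
        linarith [ih, hA]
      | false =>
        rcases decomp (false :: f') with ⟨a, f'', hdec⟩ | hall
        · -- f = replicate a false ++ true :: f''  with  a ≥ x+1
          have ha1 : 1 ≤ a := by
            by_contra ha0
            have : a = 0 := by omega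
            subst this
            simp at hdec
          have hlen : n = a + f''.length + 1 := by
            rw [← hfl, hdec]
            simp
            omega
          have hgdr : Gd x (true :: (List.replicate a false ++ true :: f'')) := by
            rw [← hdec]
            exact hgd
          have hax : x + 1 ≤ a := by
            by_contra hax
            apply hgdr
            refine ⟨0, a, ha1, by omega, true, by simp, ?_, ?_⟩
            · intro k hk1 hk2
              rw [show (0:ℕ) + k = k by omega, getElem?_tf hk1 hk2]
              simp
            · rw [show (0:ℕ) + a + 1 = a + 1 by omega, List.getElem?_cons_succ,
                List.getElem?_append, if_neg (by simp), List.length_replicate]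
              simp
          -- bijection 1 : drop the leading zeros
          have hb1 : hh x n (false :: f')
              = Nat.card {r : List Bool // r.length = f''.length + 1 ∧
                  (Gd x (false :: r) ∧ List.Lex (· < ·) r (true :: f''))} := by
            unfold hh
            apply Nat.card_eq_of_bijective
              (fun e : {e : List Bool // e.length = n ∧
                  (Gd x (true :: e) ∧ List.Lex (· < ·) e (false :: f'))} =>
                (⟨e.1.drop a, by
                  obtain ⟨he, hg1, hl⟩ := e.2
                  have hl2 : List.Lex (· < ·) e.1 (List.replicate a false ++ true :: f'') := by
                    rw [← hdec]; exact hl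
                  obtain ⟨htake, hldrop⟩ := lex_lead a (true :: f'') e.1 (by simp; omega) hl2
                  have hsplit : e.1 = List.replicate a false ++ e.1.drop a := by
                    conv_lhs => rw [← List.take_append_drop a e.1]
                    rw [htake]
                  refine ⟨by simp; omega, ?_, hldrop⟩
                  rw [hsplit] at hg1
                  exact (splice hax).mp hg1⟩ :
                  {r : List Bool // r.length = f''.length + 1 ∧
                    (Gd x (false :: r) ∧ List.Lex (· < ·) r (true :: f''))}))
            constructor
            · rintro ⟨e1, he1⟩ ⟨e2, he2⟩ hhh
              simp only [Subtype.mk.injEq] at hhh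
              apply Subtype.ext
              simp only
              have t1 : e1.take a = List.replicate a false := by
                have hl : List.Lex (· < ·) e1 (List.replicate a false ++ true :: f'') := by
                  rw [← hdec]; exact he1.2.2
                exact (lex_lead a (true :: f'') e1 (by simp [he1.1]; omega) hl).1
              have t2 : e2.take a = List.replicate a false := by
                have hl : List.Lex (· < ·) e2 (List.replicate a false ++ true :: f'') := by
                  rw [← hdec]; exact he2.2.2
                exact (lex_lead a (true :: f'') e2 (by simp [he2.1]; omega) hl).1
              calc e1 = e1.take a ++ e1.drop a := (List.take_append_drop a e1).symm
                _ = e2.take a ++ e2.drop a := by rw [t1, t2, hhh]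
                _ = e2 := List.take_append_drop a e2
            · rintro ⟨r, hr, hgr, hlr⟩
              refine ⟨⟨List.replicate a false ++ r, by simp; omega, ?_, ?_⟩, ?_⟩
              · exact (splice hax).mpr hgr
              · rw [hdec]
                exact lex_append_left _ hlr
              · apply Subtype.ext
                simp only
                exact drop_rep_append a r
          -- bijection 2 : complementation
          have hb2 : Nat.card {r : List Bool // r.length = f''.length + 1 ∧
                  (Gd x (false :: r) ∧ List.Lex (· < ·) r (true :: f''))}
              = Nat.card {w : List Bool // w.length = f''.length + 1 ∧
                  (Gd x (true :: w) ∧ List.Lex (· < ·) (false :: f''.map not) w)} := by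
            apply card_map_not
            intro r hr
            constructor
            · rintro ⟨h1, h2⟩
              constructor
              · rw [show true :: r.map not = (false :: r).map not by simp, gd_map_not]
                exact h1
              · have := (lex_map_not (by simp [hr])).mp h2
                simpa using this
            · rintro ⟨h1, h2⟩
              constructor
              · rw [show true :: r.map not = (false :: r).map not by simp, gd_map_not] at h1
                exact h1
              · apply (lex_map_not (by simp [hr])).mpr
                simpa using h2
          -- the reference word g0
          have hg0gd : Gd x (true :: false :: f''.map not) := by
            have h5 : Gd x (false :: true :: f'') := by
              have := gd_drop hgdr a
              rwa [drop_tf ha1] at this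
            have h6 := gd_map_not (x := x) (l := true :: false :: f''.map not)
            rw [show (true :: false :: f''.map not).map not = false :: true :: f'' by
              simp only [List.map_cons, Bool.not_true, Bool.not_false, map_not_map_not]] at h6
            exact h6.mp h5
          have hpart := card_partition (f''.length + 1) (fun w => Gd x (true :: w))
            (false :: f''.map not) (by simp) hg0gd
          have ihg := IH (f''.length + 1) (by omega) (false :: f''.map not) (by simp) hg0gd
          -- identify the pieces
          have hplt : Nat.card {l : List Bool // l.length = f''.length + 1 ∧
              (Gd x (true :: l) ∧ List.Lex (· < ·) l (false :: f''.map not))}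
              = hh x (f''.length + 1) (false :: f''.map not) := rfl
          have hc1 : Nat.card {l : List Bool // l.length = f''.length + 1 ∧ Gd x (true :: l)}
              = c1 x (f''.length + 1) := rfl
          rw [hplt, hc1] at hpart
          -- arithmetic
          have h2c1 := two_c1 x (f''.length + 1)
          have hstar := star x hx (f''.length + 1)
          have hwad := wt_add_not x f''
          have hwg0 : Wt x (false :: f''.map not) = Wt x (f''.map not) := by
            show (if false = true then _ else 0) + Wt x (f''.map not) = Wt x (f''.map not)
            simp
          have hwf : Wt x (false :: f') = Nex ((f''.length : ℤ) - x + 1) x + Wt x f'' := by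
            rw [hdec, wt_rep_append]
            show (if true = true then Nex ((f''.length : ℤ) - x + 1) x else 0) + Wt x f'' = _
            rw [if_pos rfl]
          rw [Finset.sum_range_succ] at hstar
          rw [← hwad] at hstar
          rw [hwg0] at ihg
          rw [hwf, hb1, hb2]
          have hq : ((f''.length : ℕ) : ℤ) + 1 = ((f''.length + 1 : ℕ) : ℤ) := by push_cast; ring
          rw [← hq] at h2c1 hstar
          -- from hpart (ℕ) to ℤ
          have hpartz : (c1 x (f''.length + 1) : ℤ)
              = (hh x (f''.length + 1) (false :: f''.map not) : ℤ)
                + (Nat.card {l : List Bool // l.length = f''.length + 1 ∧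
                    (Gd x (true :: l) ∧ List.Lex (· < ·) (false :: f''.map not) l)} : ℤ) + 1 := by
            exact_mod_cast congrArg (fun t : ℕ => (t : ℤ)) hpart
          linarith [h2c1, hstar, ihg, hpartz]
        · -- all-false case
          haveI : IsEmpty {e : List Bool // e.length = n ∧
              (Gd x (true :: e) ∧ List.Lex (· < ·) e (false :: f'))} := by
            constructor
            rintro ⟨e, he, _, hl⟩
            rw [hall] at hl
            rw [show (false :: f').length = n from hfl] at hl
            exact not_lex_rep n e he hl
          unfold hh
          rw [Nat.card_of_isEmpty]
          have hwf : Wt x (false :: f') = 0 := by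
            rw [hall, show (false :: f').length = n from hfl,
              ← List.append_nil (List.replicate n false), wt_rep_append]
            rfl
          rw [hwf]
          simp

end Loco
namespace Loco

theorem wt_ofFn (x : ℕ) : ∀ (k : ℕ) (g : Fin k → Bool),
    Wt x (List.ofFn g)
      = ∑ p : Fin k, if g p = true then Nex ((k : ℤ) - 1 - (p.1 : ℤ) - x + 1) x else 0 := by
  intro k
  induction k with
  | zero => intro g; simp [Wt]
  | succ k IHk =>
    intro g
    have hT : Wt x (List.ofFn fun i : Fin k => g i.succ)
        = ∑ p : Fin k, (if g p.succ = true then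
            Nex (((k + 1 : ℕ) : ℤ) - 1 - ((p.succ : Fin (k + 1)).1 : ℤ) - x + 1) x else 0) := by
      rw [IHk]
      apply Finset.sum_congr rfl
      intro p _
      have harg : ((k : ℤ) - 1 - (p.1 : ℤ) - x + 1)
          = (((k + 1 : ℕ) : ℤ) - 1 - ((p.succ : Fin (k + 1)).1 : ℤ) - x + 1) := by
        simp only [Fin.val_succ]
        push_cast
        ring
      rw [harg]
    rw [List.ofFn_succ]
    show (if g 0 = true then
        Nex (((List.ofFn fun i : Fin k => g i.succ).length : ℤ) - (x : ℤ) + 1) x else 0)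
        + Wt x (List.ofFn fun i : Fin k => g i.succ) = _
    rw [hT, Fin.sum_univ_succ]
    congr 1
    have harg0 : (((List.ofFn fun i : Fin k => g i.succ).length : ℤ) - (x : ℤ) + 1)
        = ((k + 1 : ℕ) : ℤ) - 1 - (((0 : Fin (k + 1)).1 : ℕ) : ℤ) - x + 1 := by
      simp only [List.length_ofFn, Fin.val_zero]
      push_cast
      ring
    rw [harg0]

end Loco

open Loco in
/-- For all `m ≥ 2`, `x ≥ 1` and every codeword `c ∈ C(m, x)` with leftmost
bit `c_{m-1} = 1`, the index satisfies
`2 g(c) = N(m, x) + Σ_{i=0}^{m-2} N(i - x + 1, x) · [c_i = 1]`, where any term `N(k, x)` with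
`k ≤ 1` is interpreted, by convention, as `2`. -/
theorem loco_index_formula_lmb_one (m x : ℕ) (hm : 2 ≤ m) (hx : 1 ≤ x)
    (c : Fin m → Bool) (hc : noForbidden m x c)
    (h0 : c ⟨m - 1, by omega⟩ = true) :
    2 * (locoIdx m x c : ℤ)
      = Nex (m : ℤ) x
        + ∑ i : Fin (m - 1),
            if c (Fin.castLE (by omega) i) = true then
              Nex (((i : ℕ) : ℤ) - (x : ℤ) + 1) x
            else 0 := by
  obtain ⟨n, rfl⟩ : ∃ n, m = n + 2 := ⟨m - 2, by omega⟩
  set g : Fin (n + 1) → Bool := fun i => c ⟨n - i.1, by omega⟩ with hg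
  -- the list form of c
  have hL : listOf c = true :: List.ofFn g := by
    unfold Loco.listOf
    rw [List.ofFn_succ]
    refine List.cons_eq_cons.mpr ⟨?_, ?_⟩
    · exact (Loco.fin_congr c (by omega) (show n + 2 - 1 < n + 2 by omega)
        (by simp)).trans h0
    · apply congrArg List.ofFn
      funext i
      exact Loco.fin_congr c (by omega) (by omega)
        (by simp only [Fin.val_succ]; omega)
  have hGd : Loco.Gd x (listOf c) := (Loco.noForbidden_iff_gd c).mp hc
  have htr : locoIdx (n + 2) x c
      = Nat.card {l : List Bool // l.length = n + 2 ∧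
          (Loco.Gd x l ∧ List.Lex (· < ·) l (true :: List.ofFn g))} := by
    unfold locoIdx
    rw [Loco.card_transfer _ _ (fun l => Loco.Gd x l ∧ List.Lex (· < ·) l (listOf c))
      (fun d => and_congr (Loco.noForbidden_iff_gd d) (Loco.lexLt_iff_lex d c))]
    rw [hL]
  rw [htr, Loco.card_split_head (n + 1)
    (fun l => Loco.Gd x l ∧ List.Lex (· < ·) l (true :: List.ofFn g))]
  have e1 : Nat.card {t : List Bool // t.length = n + 1 ∧
      (Loco.Gd x (true :: t) ∧ List.Lex (· < ·) (true :: t) (true :: List.ofFn g))}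
      = Loco.hh x (n + 1) (List.ofFn g) := by
    unfold Loco.hh
    exact Nat.card_congr (Equiv.subtypeEquivRight (fun t => and_congr_right (fun _ =>
      and_congr_right (fun _ => Loco.lex_cons_same))))
  have e2 : Nat.card {t : List Bool // t.length = n + 1 ∧
      (Loco.Gd x (false :: t) ∧ List.Lex (· < ·) (false :: t) (true :: List.ofFn g))}
      = Loco.c1 x (n + 1) := by
    rw [← Loco.c0_eq_c1]
    exact Nat.card_congr (Equiv.subtypeEquivRight (fun t => and_congr_right (fun _ =>
      and_iff_left (List.Lex.rel (by simp [Bool.lt_iff])))))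
  rw [e1, e2]
  have hml := Loco.ML x hx (n + 1) (List.ofFn g) (by simp) (by rw [← hL]; exact hGd)
  have h2c1' : 2 * (Loco.c1 x (n + 1) : ℤ) = Nex (((n + 2 : ℕ) : ℤ)) x := by
    rw [Loco.two_c1 x (n + 1), show ((n + 1 : ℕ) : ℤ) + 1 = ((n + 2 : ℕ) : ℤ) by push_cast; ring]
  -- the sum identity
  have hsum : Loco.Wt x (List.ofFn g)
      = ∑ i : Fin (n + 2 - 1),
          if c (Fin.castLE (by omega) i) = true then
            Nex (((i : ℕ) : ℤ) - (x : ℤ) + 1) x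
          else 0 := by
    rw [Loco.wt_ofFn x (n + 1) g]
    apply Fintype.sum_equiv (Fin.revPerm : Equiv.Perm (Fin (n + 1)))
    intro p
    have hval : ((Fin.revPerm p : Fin (n + 1)) : ℕ) = n - p.1 := by
      simp [Fin.revPerm, Fin.rev]
    have hcond : c (Fin.castLE (show n + 2 - 1 ≤ n + 2 by omega) (Fin.revPerm p)) = g p := by
      apply congrArg c
      apply Fin.ext
      simp only [Fin.coe_castLE]
      exact hval
    split_ifs with h1 h2 h2
    · congr 1
      rw [hval]
      have hp := p.2
      push_cast
      omega
    · exact absurd (hcond.trans h1) h2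
    · exact absurd (hcond.symm.trans h2) h1
    · rfl
  rw [← hsum]
  push_cast at hml h2c1' ⊢
  linarith [hml, h2c1']
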